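/- For s > 1, the physical dispersion relation λ_ph(ξ) = √Λ_ph(ξ) (Λ_ph being the smaller eigenvalue of M(ξ)⁻¹ R^s(ξ)) satisfies λ_ph(ξ)/ξ → 1 as ξ → 0⁺; equivalently Λ_ph(ξ)/ξ² → 1 as ξ → 0. -/

import Mathlib

open Real Complex Matrix Filter Topology

/-- Fourier symbol of the SIPG mass matrix (mesh size h = 1). -/
noncomputable def Msym (ξ : ℝ) : Matrix (Fin 2) (Fin 2) ℂ :=
  !![(((2 + Real.cos ξ) / 3 : ℝ) : ℂ), Complex.I * (Real.sin ξ : ℂ) / 6;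
     -Complex.I * (Real.sin ξ : ℂ) / 6, (((2 - Real.cos ξ) / 12 : ℝ) : ℂ)]

/-- Fourier symbol of the SIPG stiffness matrix with penalty parameter s (mesh size h = 1). -/
noncomputable def Rsym (s ξ : ℝ) : Matrix (Fin 2) (Fin 2) ℂ :=
  !![((4 * Real.sin (ξ / 2) ^ 2 : ℝ) : ℂ), 0;
     0, ((s - Real.cos (ξ / 2) ^ 2 : ℝ) : ℂ)]

/-- The matrix S(ξ) = M(ξ)⁻¹ R^s(ξ). -/
noncomputable def Ssym (s ξ : ℝ) : Matrix (Fin 2) (Fin 2) ℂ := (Msym ξ)⁻¹ * Rsym s ξ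

/-- Λ is an eigenvalue of the 2×2 complex matrix S. -/
def IsEigOf (S : Matrix (Fin 2) (Fin 2) ℂ) (Λ : ℂ) : Prop :=
  ∃ v : Fin 2 → ℂ, v ≠ 0 ∧ S.mulVec v = Λ • v

/-- The coefficient B(ξ) of the characteristic quadratic Λ²/12 − B Λ + C = 0. -/
noncomputable def Bcoef (s ξ : ℝ) : ℝ :=
  4 * Real.sin (ξ / 2) ^ 2 * (2 - Real.cos ξ) / 12 +
    (s - Real.cos (ξ / 2) ^ 2) * (2 + Real.cos ξ) / 3

/-- The coefficient C(ξ) of the characteristic quadratic Λ²/12 − B Λ + C = 0. -/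
noncomputable def Ccoef (s ξ : ℝ) : ℝ :=
  4 * Real.sin (ξ / 2) ^ 2 * (s - Real.cos (ξ / 2) ^ 2)

lemma hsc (ξ : ℝ) : (Real.sin ξ : ℂ)^2 + (Real.cos ξ : ℂ)^2 = 1 := by
  exact_mod_cast congrArg (Complex.ofReal) (Real.sin_sq_add_cos_sq ξ)

lemma det_Msym (ξ : ℝ) : (Msym ξ).det = 1/12 := by
  simp [Msym, Matrix.det_fin_two, -Complex.ofReal_cos, -Complex.ofReal_sin]
  linear_combination (-1/36 : ℂ) * hsc ξ + ((Real.sin ξ:ℂ)^2/36) * Complex.I_sq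

lemma det_char (s ξ : ℝ) (Λ : ℂ) :
    (Rsym s ξ - Λ • Msym ξ).det = Λ^2/12 - Λ * (Bcoef s ξ : ℂ) + (Ccoef s ξ : ℂ) := by
  simp [Rsym, Msym, Bcoef, Ccoef, Matrix.det_fin_two, -Complex.ofReal_cos, -Complex.ofReal_sin]
  linear_combination (-Λ^2/36 : ℂ) * hsc ξ + (Λ^2*(Real.sin ξ:ℂ)^2/36) * Complex.I_sq

lemma Msym_unit (ξ : ℝ) : IsUnit (Msym ξ).det := by
  rw [det_Msym]; norm_num

lemma eig_iff (s ξ : ℝ) (Λ : ℂ) :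
    IsEigOf (Ssym s ξ) Λ ↔ Λ^2/12 - Λ * (Bcoef s ξ : ℂ) + (Ccoef s ξ : ℂ) = 0 := by
  rw [← det_char, ← Matrix.exists_mulVec_eq_zero_iff]
  constructor
  · rintro ⟨v, hv, hev⟩
    refine ⟨v, hv, ?_⟩
    have h1 : (Msym ξ).mulVec ((Ssym s ξ).mulVec v) = (Msym ξ).mulVec (Λ • v) := by rw [hev]
    rw [Ssym, Matrix.mulVec_mulVec, ← Matrix.mul_assoc,
      Matrix.mul_nonsing_inv _ (Msym_unit ξ), Matrix.one_mul,
      Matrix.mulVec_smul] at h1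
    rw [Matrix.sub_mulVec, h1, Matrix.smul_mulVec, sub_self]
  · rintro ⟨v, hv, hev⟩
    refine ⟨v, hv, ?_⟩
    rw [Matrix.sub_mulVec, sub_eq_zero, Matrix.smul_mulVec] at hev
    rw [Ssym, ← Matrix.mulVec_mulVec, hev, Matrix.mulVec_smul, Matrix.mulVec_mulVec,
      Matrix.nonsing_inv_mul _ (Msym_unit ξ), Matrix.one_mulVec]

lemma eig_iff_real (s ξ μ : ℝ) :
    IsEigOf (Ssym s ξ) (μ : ℂ) ↔ μ^2/12 - μ * Bcoef s ξ + Ccoef s ξ = 0 := by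
  rw [eig_iff]
  constructor
  · intro h; exact_mod_cast h
  · intro h; exact_mod_cast congrArg (Complex.ofReal) h

lemma tendsto_sin_div : Tendsto (fun x : ℝ => Real.sin x / x) (𝓝[≠] 0) (𝓝 1) := by
  have h := hasDerivAt_iff_tendsto_slope.mp (Real.hasDerivAt_sin 0)
  rw [Real.cos_zero] at h
  refine h.congr fun x => ?_
  simp [slope_def_field, Real.sin_zero]

theorem Ssym_physical_eigenvalue_low_freq (s : ℝ) (hs : 1 < s)
    (Λph : ℝ → ℝ)
    (hph : ∀ ξ : ℝ, IsEigOf (Ssym s ξ) ((Λph ξ : ℝ) : ℂ) ∧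
      ∀ μ : ℝ, IsEigOf (Ssym s ξ) (μ : ℂ) → Λph ξ ≤ μ) :
    Filter.Tendsto (fun ξ : ℝ => Λph ξ / ξ ^ 2) (nhdsWithin 0 {0}ᶜ) (nhds 1) := by
  have hs1 : (0:ℝ) < s - 1 := by linarith
  have hBc : Continuous (fun ξ => Bcoef s ξ) := by unfold Bcoef; fun_prop
  have hCc : Continuous (fun ξ => Ccoef s ξ) := by unfold Ccoef; fun_prop
  have hDc : Continuous (fun ξ => Bcoef s ξ ^ 2 - Ccoef s ξ / 3) := by fun_prop
  have hB0 : Bcoef s 0 = s - 1 := by norm_num [Bcoef]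
  have hC0 : Ccoef s 0 = 0 := by norm_num [Ccoef]
  have hD0 : Bcoef s 0 ^ 2 - Ccoef s 0 / 3 = (s-1)^2 := by rw [hB0, hC0]; ring
  -- eventually B > 0 and D > 0
  have hevB : ∀ᶠ ξ in 𝓝 (0:ℝ), 0 < Bcoef s ξ := by
    have h := hBc.tendsto 0
    rw [hB0] at h
    exact h.eventually (eventually_gt_nhds hs1)
  have hevD : ∀ᶠ ξ in 𝓝 (0:ℝ), 0 < Bcoef s ξ ^ 2 - Ccoef s ξ / 3 := by
    have h := hDc.tendsto 0
    rw [hD0] at h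
    exact h.eventually (eventually_gt_nhds (by positivity))
  -- key formula
  have key : ∀ ξ : ℝ, 0 < Bcoef s ξ → 0 < Bcoef s ξ ^ 2 - Ccoef s ξ / 3 →
      Λph ξ = 2 * Ccoef s ξ / (Bcoef s ξ + Real.sqrt (Bcoef s ξ ^ 2 - Ccoef s ξ / 3)) := by
    intro ξ hB hD
    set B := Bcoef s ξ with hBdef
    set C := Ccoef s ξ with hCdef
    set q := Real.sqrt (B ^ 2 - C / 3) with hqdef
    have hq0 : 0 ≤ q := Real.sqrt_nonneg _
    have hq2 : q ^ 2 = B ^ 2 - C / 3 := Real.sq_sqrt hD.le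
    have hBq : 0 < B + q := by linarith
    have hrm : IsEigOf (Ssym s ξ) ((6 * (B - q) : ℝ) : ℂ) := by
      rw [eig_iff_real]
      linear_combination (3:ℝ) * hq2
    have hle : Λph ξ ≤ 6 * (B - q) := (hph ξ).2 _ hrm
    have heq : Λph ξ ^ 2 / 12 - Λph ξ * B + C = 0 := (eig_iff_real s ξ _).mp (hph ξ).1
    have hfac : (Λph ξ - 6 * (B - q)) * (Λph ξ - 6 * (B + q)) = 0 := by
      linear_combination (12:ℝ) * heq + (-36:ℝ) * hq2
    have hval : Λph ξ = 6 * (B - q) := by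
      rcases mul_eq_zero.mp hfac with h | h
      · linarith
      · have h1 : Λph ξ = 6 * (B + q) := by linarith
        nlinarith
    rw [hval, eq_div_iff hBq.ne']
    linear_combination (-6:ℝ) * hq2
  -- the limit of the explicit formula
  have hhalf : Tendsto (fun ξ : ℝ => ξ / 2) (𝓝[≠] 0) (𝓝[≠] 0) := by
    apply tendsto_nhdsWithin_of_tendsto_nhds_of_eventually_within
    · have : Tendsto (fun ξ : ℝ => ξ / 2) (𝓝 0) (𝓝 (0/2)) :=
        (continuous_id.div_const 2).tendsto 0
      simpa using this.mono_left nhdsWithin_le_nhds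
    · filter_upwards [self_mem_nhdsWithin] with ξ (hξ : ξ ≠ 0)
      simpa using hξ
  have hsin2 : Tendsto (fun ξ : ℝ => Real.sin (ξ/2) / (ξ/2)) (𝓝[≠] 0) (𝓝 1) :=
    tendsto_sin_div.comp hhalf
  have hcos : Tendsto (fun ξ : ℝ => s - Real.cos (ξ/2)^2) (𝓝[≠] 0) (𝓝 (s - 1)) := by
    have hc : Continuous (fun ξ : ℝ => s - Real.cos (ξ/2)^2) := by fun_prop
    have := (hc.tendsto 0).mono_left (nhdsWithin_le_nhds (s := {0}ᶜ))
    simpa using this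
  have hnum : Tendsto (fun ξ : ℝ => Ccoef s ξ / ξ ^ 2) (𝓝[≠] 0) (𝓝 (s - 1)) := by
    have h1 : Tendsto (fun ξ : ℝ => (Real.sin (ξ/2) / (ξ/2))^2 * (s - Real.cos (ξ/2)^2))
        (𝓝[≠] 0) (𝓝 (1^2 * (s - 1))) := (hsin2.pow 2).mul hcos
    rw [show (1:ℝ)^2 * (s-1) = s - 1 by ring] at h1
    refine h1.congr' ?_
    filter_upwards [self_mem_nhdsWithin] with ξ (hξ : ξ ≠ 0)
    rw [Ccoef]
    field_simp
    try ring
  have hden : Tendsto (fun ξ : ℝ => Bcoef s ξ + Real.sqrt (Bcoef s ξ ^ 2 - Ccoef s ξ / 3))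
      (𝓝[≠] 0) (𝓝 (2 * (s - 1))) := by
    have hc : Continuous (fun ξ : ℝ => Bcoef s ξ + Real.sqrt (Bcoef s ξ ^ 2 - Ccoef s ξ / 3)) :=
      hBc.add (Real.continuous_sqrt.comp hDc)
    have h0 : Bcoef s 0 + Real.sqrt (Bcoef s 0 ^ 2 - Ccoef s 0 / 3) = 2 * (s - 1) := by
      rw [hD0, hB0, Real.sqrt_sq hs1.le]; ring
    have := (hc.tendsto 0).mono_left (nhdsWithin_le_nhds (s := {0}ᶜ))
    rw [h0] at this
    exact this
  have hlim : Tendsto (fun ξ : ℝ =>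
      (2 * Ccoef s ξ / (Bcoef s ξ + Real.sqrt (Bcoef s ξ ^ 2 - Ccoef s ξ / 3))) / ξ ^ 2)
      (𝓝[≠] 0) (𝓝 1) := by
    have h1 : Tendsto (fun ξ : ℝ =>
        (2 * (Ccoef s ξ / ξ ^ 2)) / (Bcoef s ξ + Real.sqrt (Bcoef s ξ ^ 2 - Ccoef s ξ / 3)))
        (𝓝[≠] 0) (𝓝 (2 * (s-1) / (2 * (s-1)))) :=
      (tendsto_const_nhds.mul hnum).div hden (by positivity)
    rw [div_self (by positivity : (2 * (s-1) : ℝ) ≠ 0)] at h1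
    refine h1.congr fun ξ => ?_
    ring
  refine hlim.congr' ?_
  filter_upwards [nhdsWithin_le_nhds hevB, nhdsWithin_le_nhds hevD] with ξ hB hD
  rw [key ξ hB hD]
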